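/- Let k > 1 and m ≥ 1 be fixed integers with m ≤ k, let k̄ = 2⌊k/2⌋ + 1 with 2-adic expansion k̄ = 1 + 2^{a₁} + ⋯ + 2^{a_s} (0 < a₁ < ⋯ < a_s), let ε(k) = 0 if k is a power of 2 and 1 otherwise, and let p_k(X) = (X−2)^{ε(k)} Π_{l=1}^{s} Φ_{2^{a_l+1}}(X−1), of degree d = 2⌊k/2⌋ + ε(k). Then the sequence b_n = Σ_{l=0}^{n} (-1)^{C(l+m,k)} C(n,l), which equals the exponential sum S( Σ_{j=0}^{m} C(m,j)·σ_{n,k−j} ) for n ≥ k, satisfies the homogeneous linear recurrence whose characteristic polynomial is p_k: writing p_k(X) = X^d − c_{d−1}X^{d−1} − ⋯ − c₀, one has b_{n+d} = c_{d−1}b_{n+d−1} + ⋯ + c₀b_n for all n ≥ 1. -/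

import Mathlib

/-- Exponential sum of a Boolean function in `N` variables. -/
def expSum {N : ℕ} (G : (Fin N → ZMod 2) → ZMod 2) : ℤ :=
  ∑ x : Fin N → ZMod 2, (-1 : ℤ) ^ (G x).val

/-- Elementary symmetric Boolean polynomial of degree `k` in `n` variables
(`sigma n 0` is the constant `1`). -/
def sigma (n k : ℕ) (x : Fin n → ZMod 2) : ZMod 2 :=
  ∑ A ∈ Finset.powersetCard k (Finset.univ : Finset (Fin n)), ∏ i ∈ A, x i

section AuxiliaryLemmas

open Finset Polynomial

lemma lucas2 (a b : ℕ) :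
    a.choose b % 2 = ((a % 2).choose (b % 2) * ((a / 2).choose (b / 2))) % 2 := by
  haveI : Fact (Nat.Prime 2) := ⟨Nat.prime_two⟩
  exact Choose.choose_modEq_choose_mod_mul_choose_div_nat (p := 2)

lemma lucas2_iff (a b : ℕ) :
    a.choose b % 2 = 1 ↔ (b % 2 ≤ a % 2 ∧ (a / 2).choose (b / 2) % 2 = 1) := by
  rw [lucas2 a b, Nat.mul_mod]
  rcases Nat.mod_two_eq_zero_or_one a with ha | ha <;>
    rcases Nat.mod_two_eq_zero_or_one b with hb | hb <;>
      simp [ha, hb]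

lemma half2 {Y W : ℕ} (hY : 2 ∣ Y) (hW : 2 ∣ W) :
    Y.choose W % 2 = 1 ↔ (Y / 2).choose (W / 2) % 2 = 1 := by
  rw [lucas2_iff Y W]
  obtain ⟨y, rfl⟩ := hY; obtain ⟨w, rfl⟩ := hW
  simp [Nat.mul_mod_right]

lemma bitstep : ∀ (m r c Y W : ℕ), r < 2 ^ m → c ≤ 1 → 2 ^ (m + 1) ∣ Y → 2 ^ (m + 1) ∣ W →
    ((r + c * 2 ^ m + Y).choose (2 ^ m + W) % 2 = 1 ↔ (c = 1 ∧ Y.choose W % 2 = 1)) := by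
  intro m
  induction m with
  | zero =>
    intro r c Y W hr hc hY hW
    interval_cases r
    obtain ⟨y, rfl⟩ := hY; obtain ⟨w, rfl⟩ := hW
    rw [lucas2_iff]
    have e1 : 0 + c * 2 ^ 0 + 2 ^ (0 + 1) * y = c + 2 * y := by ring
    have e2 : 2 ^ 0 + 2 ^ (0 + 1) * w = 1 + 2 * w := by ring
    rw [e1, e2]
    have h1 : (c + 2 * y) % 2 = c := by omega
    have h2 : (c + 2 * y) / 2 = y := by omega
    have h3 : (1 + 2 * w) % 2 = 1 := by omega
    have h4 : (1 + 2 * w) / 2 = w := by omega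
    rw [h1, h2, h3, h4]
    have e3 : (2:ℕ) ^ (0 + 1) * y = 2 * y := by ring
    have e4 : (2:ℕ) ^ (0 + 1) * w = 2 * w := by ring
    rw [e3, e4, half2 ⟨y, rfl⟩ ⟨w, rfl⟩]
    have h5 : 2 * y / 2 = y := by omega
    have h6 : 2 * w / 2 = w := by omega
    rw [h5, h6]
    omega
  | succ m ih =>
    intro r c Y W hr hc hY hW
    obtain ⟨y, rfl⟩ := hY; obtain ⟨w, rfl⟩ := hW
    rw [lucas2_iff]
    have e1 : r + c * 2 ^ (m + 1) + 2 ^ (m + 1 + 1) * y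
        = r + 2 * (c * 2 ^ m + 2 ^ (m + 1) * y) := by ring
    have e2 : 2 ^ (m + 1) + 2 ^ (m + 1 + 1) * w
        = 2 * (2 ^ m + 2 ^ (m + 1) * w) := by ring
    rw [e1, e2]
    rw [Nat.add_mul_mod_self_left, Nat.add_mul_div_left _ _ (by norm_num : (0:ℕ) < 2),
      Nat.mul_mod_right, Nat.mul_div_cancel_left _ (by norm_num : (0:ℕ) < 2)]
    have hr2 : r / 2 < 2 ^ m := by
      have : r < 2 ^ m * 2 := by rw [← pow_succ]; exact hr
      omega
    rw [← add_assoc, ih (r / 2) c (2 ^ (m + 1) * y) (2 ^ (m + 1) * w) hr2 hc ⟨y, rfl⟩ ⟨w, rfl⟩]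
    have h2Y : 2 ∣ 2 ^ (m + 1 + 1) * y := ⟨2 ^ m * 2 * y, by ring⟩
    have h2W : 2 ∣ 2 ^ (m + 1 + 1) * w := ⟨2 ^ m * 2 * w, by ring⟩
    rw [half2 h2Y h2W]
    have e3 : 2 ^ (m + 1 + 1) * y / 2 = 2 ^ (m + 1) * y := by
      rw [(by ring : 2 ^ (m + 1 + 1) * y = 2 * (2 ^ (m + 1) * y)),
        Nat.mul_div_cancel_left _ (by norm_num : (0:ℕ) < 2)]
    have e4 : 2 ^ (m + 1 + 1) * w / 2 = 2 ^ (m + 1) * w := by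
      rw [(by ring : 2 ^ (m + 1 + 1) * w = 2 * (2 ^ (m + 1) * w)),
        Nat.mul_div_cancel_left _ (by norm_num : (0:ℕ) < 2)]
    rw [e3, e4]
    simp [Nat.zero_le]

lemma lemL {ι : Type*} [DecidableEq ι] (w : ι → ℕ) (E : Finset ι) :
    Set.InjOn w E → ∀ x : ℕ,
      (∑ T ∈ E.powerset,
        (if (x + ∑ i ∈ T, 2 ^ w i).choose (∑ i ∈ E, 2 ^ w i) % 2 = 1 then (1:ℤ) else 0)) = 1 := by
  induction E using Finset.strongInduction with
  | _ E ihE =>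
    intro hinj x
    rcases E.eq_empty_or_nonempty with rfl | hne
    · simp
    · obtain ⟨a, haE, hamin⟩ := E.exists_min_image w hne
      set M := w a with hM
      have hE : E = insert a (E.erase a) := (Finset.insert_erase haE).symm
      have hanotin : a ∉ E.erase a := Finset.notMem_erase a E
      have hbig : ∀ i ∈ E.erase a, M + 1 ≤ w i := by
        intro i hi
        have hiE : i ∈ E := Finset.mem_of_mem_erase hi
        have hne' : w i ≠ M := by
          intro h
          exact (Finset.ne_of_mem_erase hi) (hinj hiE haE h)
        have := hamin i hiE
        omega
      have hdvd : ∀ T ∈ (E.erase a).powerset, 2 ^ (M + 1) ∣ ∑ i ∈ T, 2 ^ w i := by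
        intro T hT
        refine Finset.dvd_sum ?_
        intro i hi
        exact pow_dvd_pow 2 (hbig i (Finset.mem_powerset.mp hT hi))
      have hdvdK : 2 ^ (M + 1) ∣ ∑ i ∈ E.erase a, 2 ^ w i :=
        hdvd _ (Finset.mem_powerset.mpr (Finset.Subset.refl _))
      set r := x % 2 ^ M with hr'
      set cx := x / 2 ^ M % 2 with hcx'
      set X := 2 ^ (M + 1) * (x / 2 ^ (M + 1)) with hX
      have hx : x = r + cx * 2 ^ M + X := by
        have h1 : 2 ^ M * (x / 2 ^ M) + r = x := Nat.div_add_mod x (2 ^ M)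
        have h2 : 2 * (x / 2 ^ M / 2) + cx = x / 2 ^ M := Nat.div_add_mod (x / 2 ^ M) 2
        have h3 : x / 2 ^ M / 2 = x / 2 ^ (M + 1) := by
          rw [Nat.div_div_eq_div_mul, ← pow_succ]
        calc x = 2 ^ M * (x / 2 ^ M) + r := h1.symm
          _ = 2 ^ M * (2 * (x / 2 ^ M / 2) + cx) + r := by rw [h2]
          _ = 2 ^ M * (2 * (x / 2 ^ (M + 1)) + cx) + r := by rw [h3]
          _ = r + cx * 2 ^ M + 2 ^ (M + 1) * (x / 2 ^ (M + 1)) := by ring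
      have hr : r < 2 ^ M := Nat.mod_lt _ (Nat.pow_pos (n := M) (by norm_num))
      have hcx : cx ≤ 1 := by
        have := Nat.mod_lt (x / 2 ^ M) (show 0 < 2 by norm_num)
        omega
      have hXdvd : 2 ^ (M + 1) ∣ X := ⟨_, rfl⟩
      rw [hE, Finset.sum_powerset_insert hanotin]
      have hsumE : ∑ i ∈ insert a (E.erase a), 2 ^ w i
          = 2 ^ M + ∑ i ∈ E.erase a, 2 ^ w i := by
        rw [Finset.sum_insert hanotin]
      have hterm1 : ∀ T ∈ (E.erase a).powerset,
          (if (x + ∑ i ∈ T, 2 ^ w i).choose (∑ i ∈ insert a (E.erase a), 2 ^ w i) % 2 = 1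
            then (1:ℤ) else 0)
          = (if cx = 1 then
              (if (X + ∑ i ∈ T, 2 ^ w i).choose (∑ i ∈ E.erase a, 2 ^ w i) % 2 = 1
                then (1:ℤ) else 0) else 0) := by
        intro T hT
        have harg : x + ∑ i ∈ T, 2 ^ w i
            = r + cx * 2 ^ M + (X + ∑ i ∈ T, 2 ^ w i) := by omega
        rw [hsumE, harg]
        simp only [bitstep M r cx _ _ hr hcx (Dvd.dvd.add hXdvd (hdvd T hT)) hdvdK]
        by_cases h : cx = 1 <;> simp [h]
      have hterm2 : ∀ T ∈ (E.erase a).powerset,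
          (if (x + ∑ i ∈ insert a T, 2 ^ w i).choose
              (∑ i ∈ insert a (E.erase a), 2 ^ w i) % 2 = 1 then (1:ℤ) else 0)
          = (if cx = 0 then
              (if (X + ∑ i ∈ T, 2 ^ w i).choose (∑ i ∈ E.erase a, 2 ^ w i) % 2 = 1
                then (1:ℤ) else 0) else 0) := by
        intro T hT
        have haT : a ∉ T := fun h => hanotin (Finset.mem_powerset.mp hT h)
        rw [Finset.sum_insert haT]
        rcases Nat.eq_zero_or_pos cx with hc0 | hc1
        · rw [hc0] at hx
          have harg : x + (2 ^ M + ∑ i ∈ T, 2 ^ w i)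
              = r + 1 * 2 ^ M + (X + ∑ i ∈ T, 2 ^ w i) := by omega
          rw [hsumE, harg]
          simp only [bitstep M r 1 _ _ hr le_rfl (Dvd.dvd.add hXdvd (hdvd T hT)) hdvdK]
          simp [hc0]
        · have hc1' : cx = 1 := by omega
          rw [hc1'] at hx
          have hX1 : 2 ^ (M + 1) * (x / 2 ^ (M + 1) + 1) = X + 2 ^ (M + 1) := by
            rw [hX]; ring
          have hpow : (2:ℕ) ^ (M + 1) = 2 ^ M * 2 := pow_succ 2 M
          have harg : x + (2 ^ M + ∑ i ∈ T, 2 ^ w i)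
              = r + 0 * 2 ^ M + (2 ^ (M + 1) * (x / 2 ^ (M + 1) + 1) + ∑ i ∈ T, 2 ^ w i) := by
            omega
          rw [hsumE, harg]
          simp only [bitstep M r 0 _ _ hr (by norm_num)
            (Dvd.dvd.add ⟨_, rfl⟩ (hdvd T hT)) hdvdK]
          simp [hc1']
      rw [Finset.sum_congr rfl hterm1, Finset.sum_congr rfl hterm2]
      have hIH := ihE (E.erase a) (Finset.erase_ssubset haE)
        (hinj.mono (fun i hi => Finset.mem_of_mem_erase hi)) X
      rcases Nat.eq_zero_or_pos cx with hc0 | hc1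
      · simp only [hc0]
        norm_num
        simpa using hIH
      · have hc1' : cx = 1 := by omega
        simp only [hc1']
        norm_num
        simpa using hIH

lemma neg_one_pow_ite (n : ℕ) :
    (-1:ℤ)^n = 1 - 2 * (if n % 2 = 1 then (1:ℤ) else 0) := by
  rcases Nat.even_or_odd n with h | h
  · rw [h.neg_one_pow]; simp [Nat.even_iff.mp h]
  · rw [h.neg_one_pow]; simp [Nat.odd_iff.mp h]

/-- The even case: `k` is exactly the sum of the `2^(e i)`. -/
lemma claimE (k s : ℕ) (e : Fin s → ℕ) (hinj : Function.Injective e)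
    (hk : k = ∑ i : Fin s, 2 ^ e i) (x : ℕ) :
    ∑ T ∈ (Finset.univ : Finset (Fin s)).powerset,
      (-1:ℤ) ^ ((x + ∑ i ∈ T, 2 ^ e i).choose k) = 2 ^ s - 2 := by
  have h1 : ∀ T ∈ (Finset.univ : Finset (Fin s)).powerset,
      (-1:ℤ) ^ ((x + ∑ i ∈ T, 2 ^ e i).choose k)
      = 1 - 2 * (if (x + ∑ i ∈ T, 2 ^ e i).choose (∑ i : Fin s, 2 ^ e i) % 2 = 1
          then (1:ℤ) else 0) := by
    intro T _
    rw [neg_one_pow_ite, hk]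
  rw [Finset.sum_congr rfl h1, Finset.sum_sub_distrib, ← Finset.mul_sum,
    lemL e Finset.univ (hinj.injOn) x]
  simp [Finset.card_powerset]

/-- The odd case: `k = 1 +` the sum of the `2^(e i)` with all `e i ≥ 1`. -/
lemma claimO (k s : ℕ) (e : Fin s → ℕ) (hinj : Function.Injective e)
    (he0 : ∀ i, 0 < e i)
    (hk : k = 1 + ∑ i : Fin s, 2 ^ e i) (x : ℕ) :
    ∑ T ∈ (Finset.univ : Finset (Fin s)).powerset,
      (-1:ℤ) ^ ((x + ∑ i ∈ T, 2 ^ e i).choose k) = 2 ^ s - 2 * (x % 2 : ℕ) := by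
  have hdvd : ∀ T : Finset (Fin s), 2 ^ (0 + 1) ∣ ∑ i ∈ T, 2 ^ e i := by
    intro T
    refine Finset.dvd_sum fun i _ => ?_
    simpa using Nat.pos_iff_ne_zero.mp (he0 i)
  have h1 : ∀ T ∈ (Finset.univ : Finset (Fin s)).powerset,
      (-1:ℤ) ^ ((x + ∑ i ∈ T, 2 ^ e i).choose k)
      = 1 - 2 * (if x % 2 = 1 then
          (if (2 * (x / 2) + ∑ i ∈ T, 2 ^ e i).choose (∑ i : Fin s, 2 ^ e i) % 2 = 1
            then (1:ℤ) else 0) else 0) := by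
    intro T _
    rw [neg_one_pow_ite]
    congr 1
    have harg : x + ∑ i ∈ T, 2 ^ e i
        = 0 + (x % 2) * 2 ^ 0 + (2 * (x / 2) + ∑ i ∈ T, 2 ^ e i) := by omega
    have hkk : k = 2 ^ 0 + ∑ i : Fin s, 2 ^ e i := by simpa using hk
    rw [harg, hkk]
    have hY : 2 ^ (0 + 1) ∣ 2 * (x / 2) + ∑ i ∈ T, 2 ^ e i :=
      Dvd.dvd.add (by simpa using Dvd.intro (x / 2) rfl) (hdvd T)
    simp only [bitstep 0 0 (x % 2) _ _ (by norm_num) (by omega : x % 2 ≤ 1) hY (hdvd Finset.univ)]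
    by_cases h : x % 2 = 1 <;> simp [h]
  rw [Finset.sum_congr rfl h1, Finset.sum_sub_distrib, ← Finset.mul_sum]
  rcases Nat.mod_two_eq_zero_or_one x with h | h
  · simp [h, Finset.card_powerset]
  · simp only [h, if_true, eq_self_iff_true, Nat.cast_one]
    rw [lemL e Finset.univ (hinj.injOn) (2 * (x / 2))]
    simp [Finset.card_powerset]

lemma sumpow_lt : ∀ (s : ℕ) (e : Fin (s+1) → ℕ), StrictMono e →
    ∑ i : Fin (s+1), 2 ^ e i < 2 ^ (e (Fin.last s) + 1) := by
  intro s
  induction s with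
  | zero =>
    intro e _
    rw [Fin.sum_univ_one]
    have : Fin.last 0 = 0 := rfl
    rw [this]
    exact Nat.pow_lt_pow_right one_lt_two (Nat.lt_succ_self _)
  | succ s ih =>
    intro e he
    rw [Fin.sum_univ_castSucc]
    have hmono : StrictMono (fun i : Fin (s+1) => e i.castSucc) := by
      intro a b h
      exact he (by simpa using h)
    have h1 := ih _ hmono
    have h2 : e ((Fin.last s).castSucc) + 1 ≤ e (Fin.last (s+1)) := by
      have := he (Fin.castSucc_lt_last (Fin.last s))
      omega
    have h3 : (2:ℕ) ^ (e ((Fin.last s).castSucc) + 1) ≤ 2 ^ (e (Fin.last (s+1))) :=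
      Nat.pow_le_pow_right (by norm_num) h2
    have h4 : (2:ℕ) ^ (e (Fin.last (s+1)) + 1) = 2 ^ (e (Fin.last (s+1))) * 2 := pow_succ 2 _
    omega

lemma s_eq_one (s t : ℕ) (e : Fin s → ℕ) (he : StrictMono e)
    (h : ∑ i : Fin s, 2 ^ e i = 2 ^ t) (hs : 1 ≤ s) : s = 1 := by
  obtain ⟨s', rfl⟩ : ∃ s', s = s' + 1 := ⟨s - 1, by omega⟩
  have hle : 2 ^ (e (Fin.last s')) ≤ ∑ i : Fin (s'+1), 2 ^ e i :=
    Finset.single_le_sum (f := fun i => 2 ^ e i) (fun i _ => Nat.zero_le _) (Finset.mem_univ _)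
  have hlt := sumpow_lt s' e he
  have ht : t = e (Fin.last s') := by
    have h1 : e (Fin.last s') ≤ t := by
      rw [h] at hle
      exact (Nat.pow_le_pow_iff_right (by norm_num)).mp hle
    have h2 : t < e (Fin.last s') + 1 := by
      rw [h] at hlt
      exact (Nat.pow_lt_pow_iff_right (by norm_num)).mp hlt
    omega
  have hz : ∑ i ∈ (Finset.univ : Finset (Fin (s'+1))).erase (Fin.last s'), 2 ^ e i = 0 := by
    have h5 : (∑ i ∈ (Finset.univ : Finset (Fin (s'+1))).erase (Fin.last s'), 2 ^ e i)
        + 2 ^ e (Fin.last s') = ∑ i : Fin (s'+1), 2 ^ e i :=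
      Finset.sum_erase_add _ _ (Finset.mem_univ _)
    rw [h, ht] at h5
    omega
  by_contra hne
  have hs1 : 1 ≤ s' := by omega
  have h0mem : (0 : Fin (s'+1)) ∈ (Finset.univ : Finset (Fin (s'+1))).erase (Fin.last s') := by
    refine Finset.mem_erase.mpr ⟨?_, Finset.mem_univ _⟩
    intro hc
    have : (0 : Fin (s'+1)).val = (Fin.last s').val := by rw [hc]
    simp [Fin.last] at this
    omega
  have hle0 : 2 ^ e 0 ≤ ∑ i ∈ (Finset.univ : Finset (Fin (s'+1))).erase (Fin.last s'), 2 ^ e i :=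
    Finset.single_le_sum (f := fun i => 2 ^ e i) (fun i _ => Nat.zero_le _) h0mem
  have := Nat.pow_pos (n := e 0) (show 0 < 2 by norm_num)
  omega

def shiftE : Module.End ℤ (ℕ → ℤ) where
  toFun f := fun l => f (l + 1)
  map_add' f g := rfl
  map_smul' c f := rfl

lemma shiftE_apply (f : ℕ → ℤ) (l : ℕ) : shiftE f l = f (l + 1) := rfl

lemma shiftE_pow (j : ℕ) (f : ℕ → ℤ) : (shiftE ^ j) f = fun l => f (l + j) := by
  induction j with
  | zero => simp
  | succ j ih =>
    have h1 : shiftE ^ (j + 1) = shiftE * shiftE ^ j := pow_succ' shiftE j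
    rw [h1, Module.End.mul_apply, ih]
    funext l
    show f (l + 1 + j) = f (l + (j + 1))
    congr 1
    omega

lemma shiftsum (W : ℕ → ℤ) (n : ℕ) :
    ∑ l ∈ range (n + 2), W l * ((n + 1).choose l : ℤ)
    = ∑ l ∈ range (n + 1), (W l + W (l + 1)) * (n.choose l : ℤ) := by
  have h0 : ∑ l ∈ range (n + 2), W l * ((n + 1).choose l : ℤ)
      = ∑ l ∈ range (n + 1), W (l + 1) * ((n + 1).choose (l + 1) : ℤ)
        + W 0 * ((n + 1).choose 0 : ℤ) :=
    Finset.sum_range_succ' _ (n + 1)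
  have h1 : ∑ l ∈ range (n + 1), W (l + 1) * ((n + 1).choose (l + 1) : ℤ)
      = ∑ l ∈ range (n + 1), W (l + 1) * (n.choose l : ℤ)
        + ∑ l ∈ range (n + 1), W (l + 1) * (n.choose (l + 1) : ℤ) := by
    rw [← Finset.sum_add_distrib]
    refine Finset.sum_congr rfl fun l _ => ?_
    rw [Nat.choose_succ_succ]
    push_cast
    ring
  have h2 : ∑ l ∈ range (n + 2), W l * (n.choose l : ℤ)
      = ∑ l ∈ range (n + 1), W (l + 1) * (n.choose (l + 1) : ℤ)
        + W 0 * (n.choose 0 : ℤ) :=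
    Finset.sum_range_succ' _ (n + 1)
  have h3 : ∑ l ∈ range (n + 2), W l * (n.choose l : ℤ)
      = ∑ l ∈ range (n + 1), W l * (n.choose l : ℤ)
        + W (n + 1) * (n.choose (n + 1) : ℤ) :=
    Finset.sum_range_succ _ (n + 1)
  have h4 : ∑ l ∈ range (n + 1), (W l + W (l + 1)) * (n.choose l : ℤ)
      = ∑ l ∈ range (n + 1), W l * (n.choose l : ℤ)
        + ∑ l ∈ range (n + 1), W (l + 1) * (n.choose l : ℤ) := by
    rw [← Finset.sum_add_distrib]
    refine Finset.sum_congr rfl fun l _ => ?_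
    ring
  have h5 : (n.choose (n + 1) : ℤ) = 0 := by
    rw [Nat.choose_eq_zero_of_lt (Nat.lt_succ_self n)]
    norm_num
  have h6 : ((n + 1).choose 0 : ℤ) = 1 := by norm_num
  have h7 : (n.choose 0 : ℤ) = 1 := by norm_num
  rw [h5] at h3
  rw [h7] at h2
  rw [h0, h1, h4, h6]
  linarith [h2, h3]

lemma key1 (A : ℕ → ℤ) (b : ℕ → ℤ)
    (hbA : ∀ n, b n = ∑ l ∈ range (n + 1), A l * (n.choose l : ℤ)) :
    ∀ j n, b (n + j) = ∑ l ∈ range (n + 1), ((1 + shiftE) ^ j) A l * (n.choose l : ℤ) := by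
  intro j
  induction j with
  | zero => intro n; simpa using hbA n
  | succ j ih =>
    intro n
    have h1 : n + (j + 1) = (n + 1) + j := by ring
    rw [h1, ih (n + 1)]
    have hs := shiftsum (((1 + shiftE) ^ j) A) n
    rw [hs]
    refine Finset.sum_congr rfl fun l _ => ?_
    congr 1
    have h2 : (1 + shiftE) ^ (j + 1) = (1 + shiftE) * (1 + shiftE) ^ j := pow_succ' _ _
    rw [h2, Module.End.mul_apply, LinearMap.add_apply, Module.End.one_apply, Pi.add_apply,
      shiftE_apply]

lemma key2 (p : Polynomial ℤ) (d : ℕ) (hdeg : p.natDegree < d + 1)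
    (A : ℕ → ℤ) (b : ℕ → ℤ)
    (hbA : ∀ n, b n = ∑ l ∈ range (n + 1), A l * (n.choose l : ℤ)) (n : ℕ) :
    ∑ j ∈ range (d + 1), p.coeff j * b (n + j)
    = ∑ l ∈ range (n + 1), (Polynomial.aeval (1 + shiftE) p) A l * (n.choose l : ℤ) := by
  have h1 : ∑ j ∈ range (d + 1), p.coeff j * b (n + j)
      = ∑ j ∈ range (d + 1), ∑ l ∈ range (n + 1),
          p.coeff j * (((1 + shiftE) ^ j) A l * (n.choose l : ℤ)) := by
    refine Finset.sum_congr rfl fun j _ => ?_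
    rw [key1 A b hbA j n, Finset.mul_sum]
  rw [h1, Finset.sum_comm]
  refine Finset.sum_congr rfl fun l _ => ?_
  have h2 : (Polynomial.aeval (1 + shiftE) p) A l
      = ∑ j ∈ range (d + 1), p.coeff j * (((1 + shiftE) ^ j) A l) := by
    rw [Polynomial.aeval_eq_sum_range' hdeg]
    rw [LinearMap.coe_sum, Finset.sum_apply, Finset.sum_apply]
    refine Finset.sum_congr rfl fun j _ => ?_
    rw [LinearMap.smul_apply, Pi.smul_apply, smul_eq_mul]
  rw [h2, Finset.sum_mul]
  refine Finset.sum_congr rfl fun j _ => ?_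
  ring

lemma cyclo_pow_two (e : ℕ) : Polynomial.cyclotomic (2 ^ (e + 1)) ℤ = X ^ 2 ^ e + 1 := by
  rw [cyclotomic_prime_pow_eq_geom_sum Nat.prime_two]
  rw [Finset.sum_range_succ, Finset.sum_range_one]
  ring

lemma q_eq (s ε : ℕ) (e : Fin s → ℕ) (p : Polynomial ℤ)
    (hp : p = (X - C 2) ^ ε *
      ∏ i : Fin s, (Polynomial.cyclotomic (2 ^ (e i + 1)) ℤ).comp (X - 1)) :
    p.comp (X + 1) = (X - 1) ^ ε *
      ∑ T ∈ (Finset.univ : Finset (Fin s)).powerset, X ^ (∑ i ∈ T, 2 ^ e i) := by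
  rw [hp, mul_comp, pow_comp, sub_comp, X_comp, C_comp, Polynomial.prod_comp]
  have h1 : (X + 1 - C 2 : Polynomial ℤ) = X - 1 := by
    have h : (C 2 : Polynomial ℤ) = 2 := by norm_num
    rw [h]; ring
  rw [h1]
  congr 1
  have h2 : ∀ i : Fin s, ((cyclotomic (2 ^ (e i + 1)) ℤ).comp (X - 1)).comp (X + 1)
      = X ^ 2 ^ e i + 1 := by
    intro i
    rw [comp_assoc]
    have h : ((X : Polynomial ℤ) - 1).comp (X + 1) = X := by
      rw [sub_comp, X_comp, one_comp]; ring
    rw [h, comp_X, cyclo_pow_two]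
  rw [Finset.prod_congr rfl (fun i _ => h2 i), Finset.prod_add]
  refine Finset.sum_congr rfl fun T _ => ?_
  rw [Finset.prod_const_one, mul_one, Finset.prod_pow_eq_pow_sum]

lemma g_monic_deg (a : ℕ) :
    ((Polynomial.cyclotomic (2 ^ (a + 1)) ℤ).comp (X - 1)).Monic ∧
    ((Polynomial.cyclotomic (2 ^ (a + 1)) ℤ).comp (X - 1)).natDegree = 2 ^ a := by
  rw [cyclo_pow_two, add_comp, pow_comp, X_comp, one_comp]
  have hmon : ((X - 1 : Polynomial ℤ) ^ 2 ^ a).Monic := by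
    have : ((X : Polynomial ℤ) - 1) = X - C 1 := by norm_num
    rw [this]
    exact (monic_X_sub_C 1).pow _
  have hndeg : ((X - 1 : Polynomial ℤ) ^ 2 ^ a).natDegree = 2 ^ a := by
    have : ((X : Polynomial ℤ) - 1) = X - C 1 := by norm_num
    rw [this, natDegree_pow, natDegree_X_sub_C, mul_one]
  have hdeg : ((X - 1 : Polynomial ℤ) ^ 2 ^ a).degree = (2 ^ a : ℕ) := by
    rw [degree_eq_natDegree hmon.ne_zero, hndeg]
  have hlt : (1 : Polynomial ℤ).degree < ((X - 1 : Polynomial ℤ) ^ 2 ^ a).degree := by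
    rw [degree_one, hdeg]
    exact_mod_cast pow_pos (show 0 < 2 by norm_num) a
  constructor
  · exact hmon.add_of_left hlt
  · have := degree_add_eq_left_of_degree_lt hlt
    rw [natDegree, this, hdeg]
    rfl

def zEquiv (n : ℕ) : Finset (Fin n) ≃ (Fin n → ZMod 2) where
  toFun A := fun i => if i ∈ A then 1 else 0
  invFun x := Finset.univ.filter (fun i => x i = 1)
  left_inv A := by
    ext i
    simp only [Finset.mem_filter, Finset.mem_univ, true_and]
    by_cases h : i ∈ A <;> simp [h]
  right_inv x := by
    funext i
    have h : ∀ z : ZMod 2, z = 0 ∨ z = 1 := by decide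
    rcases h (x i) with h1 | h1 <;> simp [h1]

lemma sigma_apply_card (n j : ℕ) (A : Finset (Fin n)) :
    sigma n j (fun i => if i ∈ A then 1 else 0) = (A.card.choose j : ZMod 2) := by
  unfold sigma
  have h1 : ∀ B ∈ Finset.powersetCard j (Finset.univ : Finset (Fin n)),
      (∏ i ∈ B, (if i ∈ A then (1 : ZMod 2) else 0))
      = if B ⊆ A then (1 : ZMod 2) else 0 := by
    intro B _
    by_cases hBA : B ⊆ A
    · rw [if_pos hBA]
      exact Finset.prod_eq_one fun i hi => if_pos (hBA hi)
    · rw [if_neg hBA]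
      obtain ⟨i, hiB, hiA⟩ := Finset.not_subset.mp hBA
      exact Finset.prod_eq_zero hiB (if_neg hiA)
  rw [Finset.sum_congr rfl h1, Finset.sum_boole]
  have h2 : Finset.filter (fun B => B ⊆ A) (Finset.powersetCard j (Finset.univ : Finset (Fin n)))
      = Finset.powersetCard j A := by
    ext B
    simp only [Finset.mem_filter, Finset.mem_powersetCard]
    constructor
    · rintro ⟨⟨-, h⟩, hBA⟩; exact ⟨hBA, h⟩
    · rintro ⟨hBA, h⟩; exact ⟨⟨Finset.subset_univ B, h⟩, hBA⟩
  rw [h2, Finset.card_powersetCard]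

lemma vand (m l k : ℕ) (hmk : m ≤ k) :
    ∑ i ∈ range (m + 1), m.choose i * l.choose (k - i) = (m + l).choose k := by
  rw [Nat.add_choose_eq, Finset.Nat.sum_antidiagonal_eq_sum_range_succ_mk]
  refine Finset.sum_subset (Finset.range_subset_range.mpr (by omega)) ?_
  intro i hi hni
  have hmi : m < i := by
    simp only [Finset.mem_range] at hi hni
    omega
  rw [Nat.choose_eq_zero_of_lt hmi, zero_mul]

lemma part1 (k m n : ℕ) (hmk : m ≤ k) :
    expSum (fun x : Fin n → ZMod 2 =>
      ∑ i ∈ Finset.range (m + 1), (Nat.choose m i : ZMod 2) * sigma n (k - i) x)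
    = ∑ l ∈ Finset.range (n + 1), (-1 : ℤ) ^ Nat.choose (l + m) k * (n.choose l : ℤ) := by
  unfold expSum
  rw [← Equiv.sum_comp (zEquiv n)
    (fun x => (-1 : ℤ) ^ ((∑ i ∈ Finset.range (m + 1),
      (Nat.choose m i : ZMod 2) * sigma n (k - i) x)).val)]
  have hG : ∀ A : Finset (Fin n),
      (∑ i ∈ Finset.range (m + 1), (Nat.choose m i : ZMod 2) * sigma n (k - i) (zEquiv n A))
      = (((A.card + m).choose k : ℕ) : ZMod 2) := by
    intro A
    have h1 : ∀ i ∈ Finset.range (m + 1),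
        (Nat.choose m i : ZMod 2) * sigma n (k - i) (zEquiv n A)
        = ((m.choose i * A.card.choose (k - i) : ℕ) : ZMod 2) := by
      intro i _
      have : sigma n (k - i) (zEquiv n A) = (A.card.choose (k - i) : ZMod 2) :=
        sigma_apply_card n (k - i) A
      rw [this]
      push_cast
      ring
    rw [Finset.sum_congr rfl h1, ← Nat.cast_sum, vand m A.card k hmk, add_comm m A.card]
  have hterm : ∀ A : Finset (Fin n),
      (-1 : ℤ) ^ ((∑ i ∈ Finset.range (m + 1),
        (Nat.choose m i : ZMod 2) * sigma n (k - i) (zEquiv n A))).val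
      = (-1 : ℤ) ^ ((A.card + m).choose k) := by
    intro A
    rw [hG A, ZMod.val_natCast]
    rcases Nat.even_or_odd ((A.card + m).choose k) with h | h
    · rw [h.neg_one_pow, Nat.even_iff.mp h, pow_zero]
    · rw [h.neg_one_pow, Nat.odd_iff.mp h, pow_one]
  rw [Finset.sum_congr rfl (fun A _ => hterm A)]
  rw [← Finset.powerset_univ, Finset.sum_powerset_apply_card
    (fun l => (-1 : ℤ) ^ ((l + m).choose k))]
  rw [Finset.card_univ, Fintype.card_fin]
  refine Finset.sum_congr rfl fun l _ => ?_
  rw [nsmul_eq_mul]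
  ring

end AuxiliaryLemmas

open Polynomial in
open Classical in
/-- The sequence `b_n = Σ_{l=0}^n (-1)^{C(l+m,k)} C(n,l)`, which equals
`S(Σ_{j=0}^m C(m,j) σ_{n,k−j})` for `n ≥ k`, satisfies the homogeneous linear
recurrence with characteristic polynomial
`p_k(X) = (X−2)^{ε(k)} Π_{l=1}^s Φ_{2^{a_l+1}}(X−1)` of degree `d = 2⌊k/2⌋ + ε(k)`. -/
theorem perturbed_sum_satisfies_minimal_recurrence
    (k m : ℕ) (hk : 1 < k) (hm : 1 ≤ m) (hmk : m ≤ k)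
    (s : ℕ) (e : Fin s → ℕ) (he0 : ∀ i, 0 < e i) (hemono : StrictMono e)
    (hexp : 2 * (k / 2) + 1 = 1 + ∑ i : Fin s, 2 ^ e i)
    (ε : ℕ) (hε : ε = if ∃ t : ℕ, k = 2 ^ t then 0 else 1)
    (p : Polynomial ℤ)
    (hp : p = (X - C 2) ^ ε *
      ∏ i : Fin s, (Polynomial.cyclotomic (2 ^ (e i + 1)) ℤ).comp (X - 1))
    (d : ℕ) (hd : d = 2 * (k / 2) + ε)
    (b : ℕ → ℤ)
    (hb : ∀ n : ℕ, b n =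
      ∑ l ∈ Finset.range (n + 1), (-1 : ℤ) ^ Nat.choose (l + m) k * (n.choose l : ℤ)) :
    (∀ n : ℕ, k ≤ n →
      b n = expSum (fun x : Fin n → ZMod 2 =>
        ∑ i ∈ Finset.range (m + 1), (Nat.choose m i : ZMod 2) * sigma n (k - i) x)) ∧
    (∀ n : ℕ, 1 ≤ n → b (n + d) = ∑ i ∈ Finset.range d, (-(p.coeff i)) * b (n + i)) := by
  constructor
  · intro n _
    rw [hb n]
    exact (part1 k m n hmk).symm
  · intro n hn
    classical
    set A : ℕ → ℤ := fun l => (-1 : ℤ) ^ ((l + m).choose k) with hA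
    have hbA : ∀ n : ℕ, b n = ∑ l ∈ Finset.range (n + 1), A l * (n.choose l : ℤ) :=
      fun n => hb n
    have hinj : Function.Injective e := hemono.injective
    have hsum2 : ∑ i : Fin s, 2 ^ e i = 2 * (k / 2) := by omega
    have hgm := fun i : Fin s => g_monic_deg (e i)
    have hmonic : p.Monic := by
      rw [hp]
      exact ((monic_X_sub_C (2:ℤ)).pow ε).mul
        (monic_prod_of_monic _ _ fun i _ => (hgm i).1)
    have hdeg : p.natDegree = d := by
      rw [hp, Polynomial.Monic.natDegree_mul ((monic_X_sub_C (2:ℤ)).pow ε)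
        (monic_prod_of_monic _ _ fun i _ => (hgm i).1),
        Polynomial.natDegree_pow, Polynomial.natDegree_X_sub_C,
        Polynomial.natDegree_prod _ _ (fun i _ => (hgm i).1.ne_zero)]
      have h5 : ∑ i : Fin s,
          ((Polynomial.cyclotomic (2 ^ (e i + 1)) ℤ).comp (Polynomial.X - 1)).natDegree
          = ∑ i : Fin s, 2 ^ e i := Finset.sum_congr rfl fun i _ => (hgm i).2
      rw [h5, hsum2]
      omega
    have hcoeffd : p.coeff d = 1 := by
      have h6 := hmonic.coeff_natDegree
      rwa [hdeg] at h6
    set HH : ℕ → ℤ := fun l => ∑ T ∈ (Finset.univ : Finset (Fin s)).powerset,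
        A (l + ∑ i ∈ T, 2 ^ e i) with hHHdef
    have hHH : ∀ l, HH l = if k % 2 = 1 then ((2:ℤ) ^ s - 2 * (((l + m) % 2 : ℕ) : ℤ))
        else ((2:ℤ) ^ s - 2) := by
      intro l
      have harg : ∀ T : Finset (Fin s), A (l + ∑ i ∈ T, 2 ^ e i)
          = (-1 : ℤ) ^ (((l + m) + ∑ i ∈ T, 2 ^ e i).choose k) := by
        intro T
        simp only [hA]
        congr 2
        omega
      rcases Nat.mod_two_eq_zero_or_one k with hke | hko
      · rw [if_neg (by omega)]
        have hkk : k = ∑ i : Fin s, 2 ^ e i := by omega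
        simp only [hHHdef]
        rw [Finset.sum_congr rfl fun T _ => harg T]
        exact claimE k s e hinj hkk (l + m)
      · rw [if_pos hko]
        have hkk : k = 1 + ∑ i : Fin s, 2 ^ e i := by omega
        simp only [hHHdef]
        rw [Finset.sum_congr rfl fun T _ => harg T]
        exact claimO k s e hinj he0 hkk (l + m)
    have hqa : (Polynomial.aeval (1 + shiftE) p) A
        = ((shiftE - 1) ^ ε * ∑ T ∈ (Finset.univ : Finset (Fin s)).powerset,
            shiftE ^ (∑ i ∈ T, 2 ^ e i)) A := by
      have h1 : (Polynomial.aeval (1 + shiftE) p)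
          = Polynomial.aeval shiftE (p.comp (Polynomial.X + 1)) := by
        rw [Polynomial.aeval_comp, map_add, Polynomial.aeval_X, map_one, add_comm 1 shiftE]
      rw [h1, q_eq s ε e p hp, map_mul, map_pow, map_sub, Polynomial.aeval_X, map_one,
        map_sum]
      congr 2
      refine Finset.sum_congr rfl fun T _ => ?_
      rw [map_pow, Polynomial.aeval_X]
    have hHHop : (∑ T ∈ (Finset.univ : Finset (Fin s)).powerset,
        shiftE ^ (∑ i ∈ T, 2 ^ e i)) A = HH := by
      funext l
      rw [LinearMap.coe_sum, Finset.sum_apply, Finset.sum_apply]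
      simp only [hHHdef]
      refine Finset.sum_congr rfl fun T _ => ?_
      rw [shiftE_pow]
    have hmain : ∑ j ∈ Finset.range (d + 1), p.coeff j * b (n + j) = 0 := by
      rw [key2 p d (by rw [hdeg]; exact Nat.lt_succ_self d) A b hbA n, hqa]
      by_cases hpow2 : ∃ t : ℕ, k = 2 ^ t
      · -- k a power of two: ε = 0, s = 1, HH ≡ 0
        have hε0 : ε = 0 := by simp [hε, hpow2]
        obtain ⟨t, hkt⟩ := hpow2
        have hke : k % 2 = 0 := by
          rcases Nat.eq_zero_or_pos t with rfl | ht
          · simp at hkt; omega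
          · have h7 : k = 2 * 2 ^ (t - 1) := by
              rw [hkt, ← pow_succ']
              congr 1
              omega
            omega
        have hs1 : s = 1 := by
          rcases Nat.eq_zero_or_pos s with rfl | hs
          · simp at hsum2
            omega
          · exact s_eq_one s t e hemono (by omega) hs
        rw [hε0, pow_zero, one_mul, hHHop]
        refine Finset.sum_eq_zero fun l _ => ?_
        rw [hHH l, if_neg (by omega), hs1]
        norm_num
      · have hε1 : ε = 1 := by simp [hε, hpow2]
        rw [hε1, pow_one]
        have hsub : ((shiftE - 1) * ∑ T ∈ (Finset.univ : Finset (Fin s)).powerset,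
            shiftE ^ (∑ i ∈ T, 2 ^ e i)) A = fun l => HH (l + 1) - HH l := by
          funext l
          rw [Module.End.mul_apply, hHHop, LinearMap.sub_apply, Module.End.one_apply,
            Pi.sub_apply, shiftE_apply]
        simp only [hsub]
        rcases Nat.mod_two_eq_zero_or_one k with hke | hko
        · refine Finset.sum_eq_zero fun l _ => ?_
          show (HH (l + 1) - HH l) * ((n.choose l : ℕ) : ℤ) = 0
          rw [hHH (l + 1), hHH l, if_neg (by omega), if_neg (by omega)]
          ring
        · have hterm : ∀ l : ℕ, HH (l + 1) - HH l
              = (-1 : ℤ) ^ l * (2 * (-1 : ℤ) ^ (m + 1)) := by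
            intro l
            rw [hHH (l + 1), hHH l, if_pos hko, if_pos hko]
            rcases Nat.even_or_odd (l + m) with h | h
            · have h1 : (l + m) % 2 = 0 := Nat.even_iff.mp h
              have h2 : (l + 1 + m) % 2 = 1 := by omega
              rw [h1, h2]
              have h3 : (-1 : ℤ) ^ (l + m) = 1 := h.neg_one_pow
              rw [pow_add] at h3
              rw [pow_succ]
              push_cast
              linear_combination (2 : ℤ) * h3
            · have h1 : (l + m) % 2 = 1 := Nat.odd_iff.mp h
              have h2 : (l + 1 + m) % 2 = 0 := by omega
              rw [h1, h2]
              have h3 : (-1 : ℤ) ^ (l + m) = -1 := h.neg_one_pow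
              rw [pow_add] at h3
              rw [pow_succ]
              push_cast
              linear_combination (2 : ℤ) * h3
          have h8 : ∑ l ∈ Finset.range (n + 1), (HH (l + 1) - HH l) * ((n.choose l : ℕ) : ℤ)
              = (2 * (-1 : ℤ) ^ (m + 1)) *
                ∑ l ∈ Finset.range (n + 1), (-1 : ℤ) ^ l * ((n.choose l : ℕ) : ℤ) := by
            rw [Finset.mul_sum]
            refine Finset.sum_congr rfl fun l _ => ?_
            rw [hterm l]
            ring
          rw [h8, Int.alternating_sum_range_choose_of_ne (by omega : n ≠ 0), mul_zero]
    rw [Finset.sum_range_succ, hcoeffd, one_mul] at hmain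
    have h9 : ∑ i ∈ Finset.range d, (-(p.coeff i)) * b (n + i)
        = - ∑ i ∈ Finset.range d, p.coeff i * b (n + i) := by
      rw [← Finset.sum_neg_distrib]
      exact Finset.sum_congr rfl fun i _ => by ring
    rw [h9]
    linarith [hmain]
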